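/- With the lifting setup below, the Eisenbud operators commute up to homotopy: for all j, k with 1 ≤ j, k ≤ c, there exist R-linear maps λ_n : C_n → C_{n−3} such that t_{j,n−2}∘t_{k,n} − t_{k,n−2}∘t_{j,n} = d_{n−3}∘λ_n + λ_{n−1}∘d_n for all n. -/

import Mathlib

/-!
Statement 5: the Eisenbud operators of a complex `C` over `R = Q/(f₁,…,f_c)` commute
with each other up to homotopy.

A complex of `R`-modules with a lift is encoded by a family of finitely generated free
`Q`-modules with `Q`-linear maps `d̃` and `t̃_k` satisfying `d̃ ∘ d̃ = Σ f_k • t̃_k`;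
the `R`-complex has modules `R ⊗[Q] C̃_n`, differentials `d̃ ⊗ R` and Eisenbud
operators `t_k = t̃_k ⊗ R`.
-/

open TensorProduct

section KoszulAux

variable {Q : Type} [CommRing Q]

/-- `v` is a `Q`-linear combination of the `g i`'s in `M`. -/
def Msol {M : Type} [AddCommGroup M] [Module Q M] {c : ℕ} (g : Fin c → Q) (v : M) : Prop :=
  ∃ w : Fin c → M, v = ∑ i, g i • w i

variable {M : Type} [AddCommGroup M] [Module Q M]

theorem Msol.zero {c : ℕ} (g : Fin c → Q) : Msol g (0 : M) :=
  ⟨0, by simp⟩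

theorem Msol.add {c : ℕ} {g : Fin c → Q} {x y : M} (hx : Msol g x) (hy : Msol g y) :
    Msol g (x + y) := by
  obtain ⟨w1, rfl⟩ := hx
  obtain ⟨w2, rfl⟩ := hy
  exact ⟨w1 + w2, by simp [smul_add, Finset.sum_add_distrib]⟩

theorem Msol.single {c : ℕ} (g : Fin c → Q) (i : Fin c) (x : M) : Msol g (g i • x) :=
  ⟨Pi.single i x, by simp [Pi.single_apply, Finset.sum_ite_eq']⟩

theorem Msol.smul {c : ℕ} {g : Fin c → Q} (q : Q) {x : M} (hx : Msol g x) :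
    Msol g (q • x) := by
  obtain ⟨w, rfl⟩ := hx
  exact ⟨fun i => q • w i, by simp [Finset.smul_sum, smul_comm q]⟩

theorem msol_iff_mem_smul_top {c : ℕ} (g : Fin c → Q) (x : M) :
    Msol g x ↔ x ∈ (Ideal.span (Set.range g) • ⊤ : Submodule Q M) := by
  constructor
  · rintro ⟨w, rfl⟩
    exact Submodule.sum_mem _ fun i _ =>
      Submodule.smul_mem_smul (Ideal.subset_span ⟨i, rfl⟩) Submodule.mem_top
  · intro hx
    refine Submodule.smul_induction_on hx (fun r hr n hn => ?_) (fun a b ha hb => ha.add hb)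
    clear hn
    induction hr using Submodule.span_induction generalizing n with
    | mem r hr => obtain ⟨i, rfl⟩ := hr; exact Msol.single g i n
    | zero => simpa using Msol.zero g
    | add r s _ _ hr hs => rw [add_smul]; exact (hr n).add (hs n)
    | smul q r _ hr =>
        rw [smul_eq_mul, mul_comm, mul_smul]
        exact hr (q • n)

/-- The regularity-style hypothesis we need on a module `M`. -/
def RegOn {c : ℕ} (f : Fin c → Q) (M : Type) [AddCommGroup M] [Module Q M] : Prop :=
  ∀ (i : ℕ) (hi : i < c) (v : M),
    Msol (fun m : Fin i => f (Fin.castLE hi.le m)) (f ⟨i, hi⟩ • v) →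
    Msol (fun m : Fin i => f (Fin.castLE hi.le m)) v

/-- Koszul-type lemma: if `∑ f i • v i = 0` and `f` is "regular" on `M`, then every
component `v j` lies in `(f₁,…,f_c)M`. -/
theorem Msol.key : ∀ {c : ℕ} (f : Fin c → Q), RegOn f M → ∀ (v : Fin c → M),
    (∑ i, f i • v i) = 0 → ∀ j, Msol f (v j) := by
  intro c
  induction c with
  | zero => exact fun f _ v _ j => j.elim0
  | succ c ih =>
    intro f hf v hv j
    set g : Fin c → Q := fun i => f i.castSucc with hg
    rw [Fin.sum_univ_castSucc] at hv
    have hsum : (∑ i : Fin c, g i • v i.castSucc) + f (Fin.last c) • v (Fin.last c) = 0 := hv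
    have hlastmem : Msol g (f ⟨c, c.lt_succ_self⟩ • v (Fin.last c)) := by
      refine ⟨fun i => -(v i.castSucc), ?_⟩
      have : f (Fin.last c) • v (Fin.last c) = -∑ i : Fin c, g i • v i.castSucc :=
        eq_neg_of_add_eq_zero_right hsum
      rw [show (⟨c, c.lt_succ_self⟩ : Fin (c+1)) = Fin.last c from rfl, this]
      simp [smul_neg, Finset.sum_neg_distrib]
    have hlast : Msol g (v (Fin.last c)) := hf c c.lt_succ_self (v (Fin.last c)) hlastmem
    obtain ⟨w, hw⟩ := hlast
    have hreg' : RegOn g M := fun i hi x hx => hf i (hi.trans c.lt_succ_self) x hx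
    set v' : Fin c → M := fun i => v i.castSucc + f (Fin.last c) • w i with hv'def
    have hv' : ∑ i, g i • v' i = 0 := by
      have h1 : ∑ i, g i • v' i
          = (∑ i : Fin c, g i • v i.castSucc) + f (Fin.last c) • ∑ i, g i • w i := by
        rw [Finset.smul_sum, ← Finset.sum_add_distrib]
        refine Finset.sum_congr rfl fun i _ => ?_
        rw [smul_add, smul_comm (f (Fin.last c)) (g i)]
      rw [h1, ← hw]
      exact hsum
    have hcomp := ih g hreg' v' hv'
    refine Fin.lastCases ?_ ?_ j
    · refine ⟨Fin.snoc w (0 : M), ?_⟩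
      rw [Fin.sum_univ_castSucc]
      simp [Fin.snoc_castSucc, hw]
      rfl
    · intro i
      obtain ⟨u, hu⟩ := hcomp i
      refine ⟨Fin.snoc u (-(w i)), ?_⟩
      rw [Fin.sum_univ_castSucc]
      simp only [Fin.snoc_castSucc, Fin.snoc_last, smul_neg]
      have : v i.castSucc = v' i - f (Fin.last c) • w i := by simp [hv'def]
      rw [this, hu]
      abel

theorem regOn_self {c : ℕ} (f : Fin c → Q)
    (hreg : RingTheory.Sequence.IsWeaklyRegular Q (List.ofFn f)) : RegOn f Q := by
  intro i hi r hr
  set g : Fin i → Q := fun m => f (Fin.castLE hi.le m) with hgdef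
  have hlen : i < (List.ofFn f).length := by simpa using hi
  have hsm := hreg.regular_mod_prev i hlen
  have hset : {r | r ∈ (List.ofFn f).take i} = Set.range g := by
    rw [← Fin.ofFn_take_eq_take_ofFn hi.le f]
    ext a
    simp [List.mem_ofFn]
    exact Iff.rfl
  have hideal : Ideal.ofList ((List.ofFn f).take i) = Ideal.span (Set.range g) :=
    congrArg Ideal.span hset
  set N : Submodule Q Q := Ideal.ofList ((List.ofFn f).take i) • ⊤ with hN
  have hmem : f ⟨i, hi⟩ • r ∈ N := by
    rw [hN, hideal]
    exact (msol_iff_mem_smul_top g _).mp hr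
  have hget : (List.ofFn f)[i] = f ⟨i, hi⟩ := by simp
  rw [hget] at hsm
  have hz : (Submodule.Quotient.mk r : Q ⧸ N) = 0 := by
    apply hsm
    show f ⟨i, hi⟩ • (Submodule.Quotient.mk r : Q ⧸ N) = f ⟨i, hi⟩ • (0 : Q ⧸ N)
    rw [smul_zero, ← Submodule.Quotient.mk_smul, Submodule.Quotient.mk_eq_zero]
    exact hmem
  rw [msol_iff_mem_smul_top, ← hideal]
  exact (Submodule.Quotient.mk_eq_zero N).mp hz

theorem RegOn.of_free {c : ℕ} {f : Fin c → Q} (hQ : RegOn f Q) (M : Type)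
    [AddCommGroup M] [Module Q M] [Module.Free Q M] [Module.Finite Q M] : RegOn f M := by
  intro i hi v hv
  set g : Fin i → Q := fun m => f (Fin.castLE hi.le m) with hgdef
  let b := Module.Free.chooseBasis Q M
  obtain ⟨w, hw⟩ := hv
  have hx : ∀ x, Msol g (b.repr v x) := by
    intro x
    have h1 : f ⟨i, hi⟩ • (b.repr v x) = ∑ m, g m • (b.repr (w m) x) := by
      have h2 := congrArg (fun z => b.repr z x) hw
      simpa [map_sum, map_smul] using h2
    exact hQ i hi _ ⟨fun m => b.repr (w m) x, h1⟩
  choose u hu using hx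
  refine ⟨fun m => ∑ x, u x m • b x, ?_⟩
  have hrepr : v = ∑ x, b.repr v x • b x := (b.sum_repr v).symm
  conv_lhs => rw [hrepr]
  have hterm : ∀ x, b.repr v x • b x = ∑ m, g m • (u x m • b x) := by
    intro x
    rw [hu x, Finset.sum_smul]
    exact Finset.sum_congr rfl fun m _ => smul_assoc _ _ _
  rw [Finset.sum_congr rfl fun x _ => hterm x, Finset.sum_comm]
  exact Finset.sum_congr rfl fun m _ => (Finset.smul_sum).symm

end KoszulAux

/-- The quotient ring `R = Q/(f₁,…,f_c)`. -/
abbrev Rquot (Q : Type) [CommRing Q] {c : ℕ} (f : Fin c → Q) : Type :=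
  Q ⧸ Ideal.span (Set.range f)

/-- `t_j ∘ t_k` is homotopic to `t_k ∘ t_j`. -/
theorem eisenbud_operators_commute_up_to_homotopy
    (Q : Type) [CommRing Q] (c : ℕ) (f : Fin c → Q)
    (hreg : RingTheory.Sequence.IsRegular Q (List.ofFn f))
    (Ct : ℤ → Type) [∀ n, AddCommGroup (Ct n)] [∀ n, Module Q (Ct n)]
    (hfree : ∀ n, Module.Free Q (Ct n)) (hfin : ∀ n, Module.Finite Q (Ct n))
    (dt : ∀ n : ℤ, Ct (n + 1) →ₗ[Q] Ct n)
    (tt : Fin c → ∀ n : ℤ, Ct (n + 1 + 1) →ₗ[Q] Ct n)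
    (hdd : ∀ (n : ℤ) (x : Ct (n + 1 + 1)),
      dt n (dt (n + 1) x) = ∑ k, f k • tt k n x) :
    ∀ j k : Fin c,
      ∃ lam : ∀ n : ℤ,
          (Rquot Q f ⊗[Q] Ct (n + 1 + 1 + 1)) →ₗ[Rquot Q f] (Rquot Q f ⊗[Q] Ct n),
        ∀ (n : ℤ) (x : Rquot Q f ⊗[Q] Ct (n + 1 + 1 + 1 + 1)),
          (tt j n).baseChange (Rquot Q f) ((tt k (n + 1 + 1)).baseChange (Rquot Q f) x) -
              (tt k n).baseChange (Rquot Q f)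
                ((tt j (n + 1 + 1)).baseChange (Rquot Q f) x) =
            (dt n).baseChange (Rquot Q f) (lam (n + 1) x) +
              lam n ((dt (n + 1 + 1 + 1)).baseChange (Rquot Q f) x) := by
  intro j k
  have regHom : ∀ a b : ℤ, RegOn f (Ct a →ₗ[Q] Ct b) := by
    intro a b
    haveI := hfree a; haveI := hfin a; haveI := hfree b; haveI := hfin b
    exact (regOn_self f hreg.toIsWeaklyRegular).of_free _
  -- Step 1: `d ∘ t_k - t_k ∘ d = ∑ f m • σ m`.
  have h1 : ∀ n : ℤ, ∃ w : Fin c → (Ct (n+1+1+1) →ₗ[Q] Ct n),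
      dt n ∘ₗ tt k (n+1) - tt k n ∘ₗ dt (n+1+1) = ∑ m, f m • w m := by
    intro n
    have hv : ∑ l, f l • (dt n ∘ₗ tt l (n+1) - tt l n ∘ₗ dt (n+1+1)) = 0 := by
      ext x
      simp only [LinearMap.coe_sum, Finset.sum_apply, LinearMap.smul_apply,
        LinearMap.sub_apply, LinearMap.coe_comp, Function.comp_apply,
        LinearMap.zero_apply, smul_sub]
      rw [Finset.sum_sub_distrib]
      have e1 : ∑ l, f l • dt n (tt l (n+1) x) = dt n (dt (n+1) (dt (n+1+1) x)) := by
        rw [hdd (n+1) x, map_sum]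
        exact Finset.sum_congr rfl fun l _ => (map_smul _ _ _).symm
      have e2 : ∑ l, f l • tt l n (dt (n+1+1) x) = dt n (dt (n+1) (dt (n+1+1) x)) :=
        (hdd n (dt (n+1+1) x)).symm
      rw [e1, e2, sub_self]
    exact Msol.key f (regHom _ _) _ hv k
  choose σ hσ using h1
  have hσp : ∀ (n : ℤ) (y : Ct (n+1+1+1)),
      dt n (tt k (n+1) y) - tt k n (dt (n+1+1) y) = ∑ m, f m • σ n m y := by
    intro n y
    have h := LinearMap.congr_fun (hσ n) y
    simp at h
    exact h
  -- Step 2: `t_j t_k - t_k t_j - σ_j d - d σ_j = ∑ f m • τ m`.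
  have h2 : ∀ n : ℤ, ∃ τ : Fin c → (Ct (n+1+1+1+1) →ₗ[Q] Ct n),
      tt j n ∘ₗ tt k (n+1+1) - tt k n ∘ₗ tt j (n+1+1) - σ n j ∘ₗ dt (n+1+1+1)
          - dt n ∘ₗ σ (n+1) j = ∑ m, f m • τ m := by
    intro n
    have hu : ∑ m, f m • (tt m n ∘ₗ tt k (n+1+1) - tt k n ∘ₗ tt m (n+1+1)
        - σ n m ∘ₗ dt (n+1+1+1) - dt n ∘ₗ σ (n+1) m) = 0 := by
      ext x
      simp only [LinearMap.coe_sum, Finset.sum_apply, LinearMap.smul_apply,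
        LinearMap.sub_apply, LinearMap.coe_comp, Function.comp_apply,
        LinearMap.zero_apply, smul_sub]
      rw [Finset.sum_sub_distrib, Finset.sum_sub_distrib, Finset.sum_sub_distrib]
      have eA : ∑ m, f m • tt m n (tt k (n+1+1) x)
          = dt n (dt (n+1) (tt k (n+1+1) x)) := (hdd n _).symm
      have eB : ∑ m, f m • tt k n (tt m (n+1+1) x)
          = tt k n (dt (n+1+1) (dt (n+1+1+1) x)) := by
        rw [hdd (n+1+1) x, map_sum]
        exact Finset.sum_congr rfl fun m _ => (map_smul _ _ _).symm
      have eC : ∑ m, f m • σ n m (dt (n+1+1+1) x)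
          = dt n (tt k (n+1) (dt (n+1+1+1) x))
            - tt k n (dt (n+1+1) (dt (n+1+1+1) x)) := (hσp n _).symm
      have eD : ∑ m, f m • dt n (σ (n+1) m x)
          = dt n (dt (n+1) (tt k (n+1+1) x)) - dt n (tt k (n+1) (dt (n+1+1+1) x)) := by
        calc ∑ m, f m • dt n (σ (n+1) m x) = dt n (∑ m, f m • σ (n+1) m x) := by
              rw [map_sum]
              exact Finset.sum_congr rfl fun m _ => (map_smul _ _ _).symm
          _ = _ := by rw [← hσp (n+1) x, map_sub]
      rw [eA, eB, eC, eD]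
      abel
    exact Msol.key f (regHom _ _) _ hu j
  choose τ hτ using h2
  refine ⟨fun n => (σ n j).baseChange (Rquot Q f), ?_⟩
  intro n x
  -- base change kills `∑ f m • τ m`.
  have hb0 : (∑ m, f m • τ n m).baseChange (Rquot Q f) x = 0 := by
    rw [show LinearMap.baseChange (Rquot Q f) (∑ m, f m • τ n m)
        = ∑ m, LinearMap.baseChange (Rquot Q f) (f m • τ n m) from
      map_sum (LinearMap.baseChangeHom Q (Rquot Q f) _ _) _ _]
    rw [LinearMap.coe_sum, Finset.sum_apply]
    refine Finset.sum_eq_zero fun m _ => ?_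
    rw [LinearMap.baseChange_smul, LinearMap.smul_apply,
      ← algebraMap_smul (Rquot Q f) (f m),
      show algebraMap Q (Rquot Q f) (f m) = 0 from
        Ideal.Quotient.eq_zero_iff_mem.mpr (Ideal.subset_span ⟨m, rfl⟩),
      zero_smul]
  have hE := LinearMap.congr_fun (congrArg (LinearMap.baseChange (Rquot Q f)) (hτ n)) x
  rw [LinearMap.baseChange_sub, LinearMap.baseChange_sub, LinearMap.baseChange_sub,
    LinearMap.baseChange_comp, LinearMap.baseChange_comp, LinearMap.baseChange_comp,
    LinearMap.baseChange_comp] at hE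
  simp only [LinearMap.sub_apply, LinearMap.coe_comp, Function.comp_apply] at hE
  rw [hb0, sub_sub, sub_sub, sub_eq_zero] at hE
  rw [hE]
  abel
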